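/- Let X be a normal Tychonoff space, viewed inside its Stone–Čech compactification βX. Suppose α : [0,1] → βX is continuous with α(t) ∈ X for all t ∈ [0,1) and α(1) ∈ βX \ X. If (tₙ) is a sequence of distinct points of [0,1) with α(tₙ) distinct in X and tₙ → 1, then there is no continuous function F : X → [0,1] with F(α(tₙ)) = n mod 2 for all n. (Key step: any such F extends continuously to βX, contradicting convergence of α(tₙ) to α(1).) -/
import Mathlib


theorem no_alternating_extension_along_path
    {X : Type*} [TopologicalSpace X] [NormalSpace X] [T1Space X]
    [CompletelyRegularSpace X]
    (α : C(unitInterval, StoneCech X))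
    (hX : ∀ t : unitInterval, t < 1 → α t ∈ Set.range (stoneCechUnit : X → StoneCech X))
    (h1 : α 1 ∉ Set.range (stoneCechUnit : X → StoneCech X))
    (t : ℕ → unitInterval)
    (ht_mono : StrictMono t) (ht_lt : ∀ n, t n < 1)
    (ht_lim : Filter.Tendsto t Filter.atTop (nhds 1))
    (hdist : Function.Injective (fun n => α (t n)))
    (hmem : ∀ n, α (t n) ∈ Set.range (stoneCechUnit : X → StoneCech X)) :
    ¬ ∃ F : C(X, ℝ), (∀ x, F x ∈ Set.Icc (0 : ℝ) 1) ∧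
      ∀ n : ℕ, ∀ x : X, stoneCechUnit x = α (t n) →
        F x = if n % 2 = 0 then 0 else 1 := by
  rintro ⟨F, hF, hval⟩
  -- extend F to βX via the Stone–Čech universal property, target [0,1]
  have hfc : Continuous (fun x : X => (⟨F x, hF x⟩ : Set.Icc (0:ℝ) 1)) :=
    F.continuous.subtype_mk _
  set E : StoneCech X → Set.Icc (0:ℝ) 1 := stoneCechExtend hfc with hEdef
  have hEc : Continuous E := continuous_stoneCechExtend hfc
  have hE : ∀ x : X, E (stoneCechUnit x) = ⟨F x, hF x⟩ := fun x =>
    congrFun (stoneCechExtend_extends hfc) x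
  -- the real-valued sequence of values along the path
  have hv : ∀ n : ℕ, ((E (α (t n)) : ℝ)) = if n % 2 = 0 then 0 else 1 := by
    intro n
    obtain ⟨x, hx⟩ := hmem n
    rw [← hx, hE]
    exact hval n x hx
  have hlim : Filter.Tendsto (fun n => ((E (α (t n)) : ℝ)))
      Filter.atTop (nhds ((E (α 1) : ℝ))) := by
    have := ((continuous_subtype_val.comp (hEc.comp α.continuous)).tendsto 1).comp ht_lim
    exact this
  have heven : Filter.Tendsto (fun n : ℕ => 2 * n) Filter.atTop Filter.atTop :=
    Filter.tendsto_atTop_mono (fun n => Nat.le_mul_of_pos_left n two_pos) Filter.tendsto_id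
  have hodd : Filter.Tendsto (fun n : ℕ => 2 * n + 1) Filter.atTop Filter.atTop :=
    Filter.tendsto_atTop_mono (fun n => Nat.le_succ_of_le
      (Nat.le_mul_of_pos_left n two_pos)) Filter.tendsto_id
  have h0 : ((E (α 1) : ℝ)) = 0 := by
    have := hlim.comp heven
    have heq : (fun n : ℕ => ((E (α (t (2 * n))) : ℝ))) = fun _ => (0:ℝ) := by
      funext n
      have h2 : (2 * n) % 2 = 0 := by omega
      rw [hv (2 * n), h2]; simp
    rw [show ((fun n => ((E (α (t n)) : ℝ))) ∘ fun n : ℕ => 2 * n)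
        = fun n : ℕ => ((E (α (t (2 * n))) : ℝ)) from rfl, heq] at this
    exact tendsto_nhds_unique this tendsto_const_nhds
  have h1' : ((E (α 1) : ℝ)) = 1 := by
    have := hlim.comp hodd
    have heq : (fun n : ℕ => ((E (α (t (2 * n + 1))) : ℝ))) = fun _ => (1:ℝ) := by
      funext n
      have h2 : (2 * n + 1) % 2 = 1 := by omega
      rw [hv (2 * n + 1), h2]; simp
    rw [show ((fun n => ((E (α (t n)) : ℝ))) ∘ fun n : ℕ => 2 * n + 1)
        = fun n : ℕ => ((E (α (t (2 * n + 1))) : ℝ)) from rfl, heq] at this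
    exact tendsto_nhds_unique this tendsto_const_nhds
  exact zero_ne_one (h0 ▸ h1')
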